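/- arXiv:2411.01064 — 4 statements merged into one kernel-verified Lean document; each statement's English description precedes it below -/
import Mathlib

section
/- Let Q : ℝ^d × ℝ → ℝ (arguments θ and income y) be differentiable with ∂Q/∂y(θ, y) > 0 for all (θ, y); let q : ℝ × ℝ^d → ℝ and let P : ℝ × ℝ^d → ℝ be differentiable in θ. Suppose Q satisfies, for every j = 1, …, d and all (θ, y), the partial differential equation ∂Q/∂θ_j(θ, y) + ∂P/∂θ_j(q(y, θ), θ) · ∂Q/∂y(θ, y) = 0. Let e : ℝ^d × ℝ → ℝ be differentiable in θ and satisfy Q(θ, e(θ, u)) = u for all θ. Then for each j: ∂e/∂θ_j(θ, u) = ∂P/∂θ_j(q(e(θ, u), θ), θ). -/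
/-- Nonlinear-budget Shephard's lemma: if the quantile indirect utility `Q`
satisfies the Roy-identity PDE system and the expenditure function `e`
inverts `Q` in income, then `∂e/∂θ_j = ∂P/∂θ_j` evaluated at the
demanded quantity. -/
theorem stmt_7 {d : ℕ} (Q : (Fin d → ℝ) × ℝ → ℝ) (hQ : Differentiable ℝ Q)
    (hQy : ∀ (θ : Fin d → ℝ) (y : ℝ), 0 < fderiv ℝ Q (θ, y) (0, 1))
    (q : ℝ × (Fin d → ℝ) → ℝ) (P : ℝ × (Fin d → ℝ) → ℝ)
    (hP : ∀ s : ℝ, Differentiable ℝ (fun θ => P (s, θ)))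
    (hPDE : ∀ (j : Fin d) (θ : Fin d → ℝ) (y : ℝ),
      fderiv ℝ Q (θ, y) (Pi.single j 1, 0)
        + fderiv ℝ (fun θ' => P (q (y, θ), θ')) θ (Pi.single j 1)
            * fderiv ℝ Q (θ, y) (0, 1) = 0)
    (e : (Fin d → ℝ) × ℝ → ℝ)
    (he : ∀ u : ℝ, Differentiable ℝ (fun θ => e (θ, u)))
    (heQ : ∀ (θ : Fin d → ℝ) (u : ℝ), Q (θ, e (θ, u)) = u) :
    ∀ (j : Fin d) (θ : Fin d → ℝ) (u : ℝ),
      fderiv ℝ (fun θ' => e (θ', u)) θ (Pi.single j 1)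
        = fderiv ℝ (fun θ' => P (q (e (θ, u), θ), θ')) θ (Pi.single j 1) := by
  intro j θ u
  set y := e (θ, u) with hy
  set v : Fin d → ℝ := Pi.single j 1 with hv
  -- the inner map θ' ↦ (θ', e (θ', u))
  have hg : HasFDerivAt (fun θ' : Fin d → ℝ => ((θ', e (θ', u)) : (Fin d → ℝ) × ℝ))
      ((ContinuousLinearMap.id ℝ (Fin d → ℝ)).prod (fderiv ℝ (fun θ' => e (θ', u)) θ)) θ :=
    HasFDerivAt.prodMk (hasFDerivAt_id θ) ((he u θ).hasFDerivAt)
  have hcomp : HasFDerivAt (fun θ' : Fin d → ℝ => Q (θ', e (θ', u)))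
      ((fderiv ℝ Q (θ, y)).comp
        ((ContinuousLinearMap.id ℝ (Fin d → ℝ)).prod (fderiv ℝ (fun θ' => e (θ', u)) θ))) θ :=
    ((hQ (θ, y)).hasFDerivAt).comp θ hg
  have hconst : (fun θ' : Fin d → ℝ => Q (θ', e (θ', u))) = fun _ => u := by
    funext θ'; exact heQ θ' u
  have hzero : ((fderiv ℝ Q (θ, y)).comp
      ((ContinuousLinearMap.id ℝ (Fin d → ℝ)).prod (fderiv ℝ (fun θ' => e (θ', u)) θ)))
      = 0 := by
    have := hcomp.fderiv
    rw [hconst] at this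
    rw [← this, fderiv_fun_const]
    rfl
  set α := fderiv ℝ (fun θ' => e (θ', u)) θ v with hα
  have hv0 : fderiv ℝ Q (θ, y) (v, α) = 0 := by
    have := congrArg (fun L : (Fin d → ℝ) →L[ℝ] ℝ => L v) hzero
    simpa using this
  -- decompose (v, α) = (v, 0) + α • (0, 1)
  have hdecomp : ((v, α) : (Fin d → ℝ) × ℝ) = (v, 0) + α • ((0 : Fin d → ℝ), (1 : ℝ)) := by
    simp [Prod.ext_iff]
  have hsplit : fderiv ℝ Q (θ, y) (v, α)
      = fderiv ℝ Q (θ, y) (v, 0) + α * fderiv ℝ Q (θ, y) (0, 1) := by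
    rw [hdecomp, map_add, map_smul]; ring_nf
  have hpde := hPDE j θ y
  have hQy' := hQy θ y
  have key : α * fderiv ℝ Q (θ, y) (0, 1)
      = fderiv ℝ (fun θ' => P (q (y, θ), θ')) θ v * fderiv ℝ Q (θ, y) (0, 1) := by
    have h1 : fderiv ℝ Q (θ, y) (v, 0) + α * fderiv ℝ Q (θ, y) (0, 1) = 0 := by
      rw [← hsplit]; exact hv0
    rw [← hv] at hpde
    linarith
  exact mul_right_cancel₀ (ne_of_gt hQy') key
end

section
/- (Slutsky symmetry for nonlinear budget sets.) Let P : ℝ × ℝ^d → ℝ (arguments: attribute level q and parameter θ), with d ≥ 2, be twice continuously differentiable; let q : ℝ × ℝ^d → ℝ (arguments: income y and θ) be continuously differentiable; and let e : ℝ^d × ℝ → ℝ be twice continuously differentiable in θ and satisfy, for all j = 1, …, d and all (θ, u): ∂e/∂θ_j(θ, u) = ∂P/∂θ_j(q(e(θ, u), θ), θ). Then for all j, k ∈ {1, …, d}, at every point y = e(θ, u): ∂²P/∂θ_j∂q(q(y,θ), θ) · [ ∂q/∂y(y,θ) · ∂P/∂θ_k(q(y,θ), θ) + ∂q/∂θ_k(y,θ)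 ] = ∂²P/∂θ_k∂q(q(y,θ), θ) · [ ∂q/∂y(y,θ) · ∂P/∂θ_j(q(y,θ), θ) + ∂q/∂θ_j(y,θ) ]. -/
/-- Slutsky symmetry for nonlinear budget sets: if the expenditure function
satisfies the nonlinear-budget Shephard relations
`∂e/∂θ_j(θ,u) = ∂P/∂θ_j(q(e(θ,u),θ),θ)`, then at every point `y = e(θ,u)`
the quantile demand satisfies the symmetry condition
`∂²P/∂θ_j∂q · (∂q/∂y · ∂P/∂θ_k + ∂q/∂θ_k) = ∂²P/∂θ_k∂q · (∂q/∂y · ∂P/∂θ_j + ∂q/∂θ_j)`. -/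
theorem stmt_8 {d : ℕ} (hd : 2 ≤ d)
    (P : ℝ × (Fin d → ℝ) → ℝ) (hP : ContDiff ℝ 2 P)
    (q : ℝ × (Fin d → ℝ) → ℝ) (hq : ContDiff ℝ 1 q)
    (e : (Fin d → ℝ) × ℝ → ℝ)
    (he : ∀ u : ℝ, ContDiff ℝ 2 (fun θ => e (θ, u)))
    (hShep : ∀ (j : Fin d) (θ : Fin d → ℝ) (u : ℝ),
      fderiv ℝ (fun θ' => e (θ', u)) θ (Pi.single j 1)
        = fderiv ℝ P (q (e (θ, u), θ), θ) (0, Pi.single j 1)) :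
    ∀ (j k : Fin d) (θ : Fin d → ℝ) (u y : ℝ), y = e (θ, u) →
      deriv (fun s => fderiv ℝ P (s, θ) (0, Pi.single j 1)) (q (y, θ))
          * (fderiv ℝ q (y, θ) (1, 0)
                * fderiv ℝ P (q (y, θ), θ) (0, Pi.single k 1)
              + fderiv ℝ q (y, θ) (0, Pi.single k 1))
        = deriv (fun s => fderiv ℝ P (s, θ) (0, Pi.single k 1)) (q (y, θ))
          * (fderiv ℝ q (y, θ) (1, 0)
                * fderiv ℝ P (q (y, θ), θ) (0, Pi.single j 1)
              + fderiv ℝ q (y, θ) (0, Pi.single j 1)) := by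
  intro j k θ u y hy
  subst hy
  classical
  set y := e (θ, u) with hydef
  set x : ℝ × (Fin d → ℝ) := (q (y, θ), θ) with hxdef
  -- v i is the direction (0, eᵢ)
  set v : Fin d → ℝ × (Fin d → ℝ) := fun i => ((0 : ℝ), Pi.single i 1) with hvdef
  have hG : ContDiff ℝ 1 (fderiv ℝ P) := hP.fderiv_right (by norm_num)
  set B := fderiv ℝ (fderiv ℝ P) x with hBdef
  have hGx : HasFDerivAt (fderiv ℝ P) B x :=
    ((hG.differentiable one_ne_zero) x).hasFDerivAt
  set m := fderiv ℝ q (y, θ) with hmdef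
  have hm : HasFDerivAt q m (y, θ) := ((hq.differentiable one_ne_zero) (y, θ)).hasFDerivAt
  have hE := he u
  have hEd : HasFDerivAt (fun θ' => e (θ', u)) (fderiv ℝ (fun θ' => e (θ', u)) θ) θ :=
    ((hE.differentiable (by norm_num)) θ).hasFDerivAt
  set H := fderiv ℝ (fun θ' => e (θ', u)) θ with hHdef
  have hψ : HasFDerivAt (fun θ' => ((e (θ', u) : ℝ), θ'))
      (H.prod (ContinuousLinearMap.id ℝ (Fin d → ℝ))) θ := hEd.prodMk (hasFDerivAt_id θ)
  set L : (Fin d → ℝ) →L[ℝ] (ℝ × (Fin d → ℝ)) :=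
    ((m.comp (H.prod (ContinuousLinearMap.id ℝ (Fin d → ℝ)))).prod
      (ContinuousLinearMap.id ℝ (Fin d → ℝ))) with hLdef
  have hΦ : HasFDerivAt (fun θ' => ((q (e (θ', u), θ') : ℝ), θ')) L θ := by
    have h0 := HasFDerivAt.comp (f := fun θ' => ((e (θ', u) : ℝ), θ')) (g := q) θ hm hψ
    have h1 : HasFDerivAt (fun θ' => q (e (θ', u), θ'))
        (m.comp (H.prod (ContinuousLinearMap.id ℝ (Fin d → ℝ)))) θ := h0
    exact h1.prodMk (hasFDerivAt_id θ)
  -- second derivative of e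
  have hH1 : ContDiff ℝ 1 (fderiv ℝ (fun θ' => e (θ', u))) := hE.fderiv_right (by norm_num)
  set Be := fderiv ℝ (fderiv ℝ (fun θ' => e (θ', u))) θ with hBedef
  have hBe : HasFDerivAt (fderiv ℝ (fun θ' => e (θ', u))) Be θ :=
    ((hH1.differentiable one_ne_zero) θ).hasFDerivAt
  -- key chain rule computation
  have key : ∀ i i' : Fin d,
      B (L (Pi.single i' 1)) (v i) = Be (Pi.single i' 1) (Pi.single i 1) := by
    intro i i'
    have hFi : HasFDerivAt (fun θ' => fderiv ℝ P (q (e (θ', u), θ'), θ') (v i))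
        ((ContinuousLinearMap.apply ℝ ℝ (v i)).comp (B.comp L)) θ := by
      have h0 := HasFDerivAt.comp (f := fun θ' => (((q (e (θ', u), θ') : ℝ), θ') : ℝ × (Fin d → ℝ)))
        (g := fderiv ℝ P) θ hGx hΦ
      exact (ContinuousLinearMap.apply ℝ ℝ (v i)).hasFDerivAt.comp θ h0
    have hFe : HasFDerivAt (fun θ' => fderiv ℝ (fun t => e (t, u)) θ' (Pi.single i 1))
        ((ContinuousLinearMap.apply ℝ ℝ (Pi.single i 1)).comp Be) θ := by
      exact (ContinuousLinearMap.apply ℝ ℝ (Pi.single i 1)).hasFDerivAt.comp θ hBe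
    have hfun : (fun θ' => fderiv ℝ (fun t => e (t, u)) θ' (Pi.single i 1))
        = fun θ' => fderiv ℝ P (q (e (θ', u), θ'), θ') (v i) :=
      funext fun θ' => hShep i θ' u
    rw [hfun] at hFe
    have := hFi.unique hFe
    have := congrArg (fun (T : (Fin d → ℝ) →L[ℝ] ℝ) => T (Pi.single i' 1)) this
    simpa using this
  -- compute L (Pi.single i' 1)
  have hLval : ∀ i' : Fin d,
      L (Pi.single i' 1) = (m (fderiv ℝ P x (v i'), Pi.single i' 1), Pi.single i' 1) := by
    intro i'
    have hH' : H (Pi.single i' 1) = fderiv ℝ P x (v i') := hShep i' θ u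
    simp [hLdef, ContinuousLinearMap.prod_apply, hH']
  -- expand bilinear terms
  have hmexp' : ∀ i' : Fin d,
      m ((fderiv ℝ P x (v i'), Pi.single i' 1))
        = m ((1 : ℝ), (0 : Fin d → ℝ)) * fderiv ℝ P x (v i') + m (v i') := by
    intro i'
    have hsp : ((fderiv ℝ P x (v i'), Pi.single i' 1) : ℝ × (Fin d → ℝ))
        = fderiv ℝ P x (v i') • ((1 : ℝ), (0 : Fin d → ℝ)) + v i' := by
      simp [hvdef, Prod.ext_iff]
    rw [hsp, map_add, map_smul]
    simp [mul_comm]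
  have hBexp' : ∀ i i' : Fin d,
      B ((m (fderiv ℝ P x (v i'), Pi.single i' 1), Pi.single i' 1)) (v i)
        = m ((fderiv ℝ P x (v i'), Pi.single i' 1)) * B ((1 : ℝ), (0 : Fin d → ℝ)) (v i)
          + B (v i') (v i) := by
    intro i i'
    have hsp : ((m (fderiv ℝ P x (v i'), Pi.single i' 1), Pi.single i' 1) : ℝ × (Fin d → ℝ))
        = m ((fderiv ℝ P x (v i'), Pi.single i' 1)) • ((1 : ℝ), (0 : Fin d → ℝ)) + v i' := by
      simp [hvdef, Prod.ext_iff]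
    rw [hsp, map_add, map_smul]
    simp
  have E : ∀ i i' : Fin d,
      m ((fderiv ℝ P x (v i'), Pi.single i' 1)) * B ((1 : ℝ), (0 : Fin d → ℝ)) (v i)
          + B (v i') (v i)
        = Be (Pi.single i' 1) (Pi.single i 1) := by
    intro i i'
    have h := key i i'
    rw [hLval i', hBexp' i i'] at h
    exact h
  -- symmetry facts
  have hsymE : Be (Pi.single k 1) (Pi.single j 1) = Be (Pi.single j 1) (Pi.single k 1) :=
    (hE.contDiffAt.isSymmSndFDerivAt (by simp)) _ _
  have hsymP : B (v k) (v j) = B (v j) (v k) :=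
    (hP.contDiffAt.isSymmSndFDerivAt (by simp)) _ _
  -- the deriv terms in the goal
  have hderiv : ∀ i : Fin d,
      deriv (fun s => fderiv ℝ P (s, θ) (v i)) (q (y, θ))
        = B ((1 : ℝ), (0 : Fin d → ℝ)) (v i) := by
    intro i
    have h1 : HasDerivAt (fun s : ℝ => ((s, θ) : ℝ × (Fin d → ℝ)))
        (((1 : ℝ), (0 : Fin d → ℝ))) (q (y, θ)) :=
      (hasDerivAt_id _).prodMk (hasDerivAt_const _ _)
    have h2 : HasDerivAt (fun s : ℝ => fderiv ℝ P (s, θ))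
        (B ((1 : ℝ), (0 : Fin d → ℝ))) (q (y, θ)) := hGx.comp_hasDerivAt _ h1
    have h3 := (ContinuousLinearMap.apply ℝ ℝ (v i)).hasFDerivAt.comp_hasDerivAt _ h2
    simpa [Function.comp_def] using h3.deriv
  -- assemble
  have main : m ((fderiv ℝ P x (v k), Pi.single k 1)) * B ((1 : ℝ), (0 : Fin d → ℝ)) (v j)
      = m ((fderiv ℝ P x (v j), Pi.single j 1)) * B ((1 : ℝ), (0 : Fin d → ℝ)) (v k) := by
    have h1 := E j k
    have h2 := E k j
    rw [hsymE] at h1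
    rw [← h2] at h1
    linarith [hsymP]
  show deriv (fun s => fderiv ℝ P (s, θ) (v j)) (q (y, θ))
      * (m ((1 : ℝ), (0 : Fin d → ℝ)) * fderiv ℝ P x (v k) + m (v k))
    = deriv (fun s => fderiv ℝ P (s, θ) (v k)) (q (y, θ))
      * (m ((1 : ℝ), (0 : Fin d → ℝ)) * fderiv ℝ P x (v j) + m (v j))
  rw [hderiv j, hderiv k, ← hmexp' k, ← hmexp' j]
  linear_combination main
end

section
/- Suppose e : ℝ² × ℝ → ℝ, written e(θ₁, θ₂, u), is twice continuously differentiable in (θ₁, θ₂) on a nonempty open set, and there exist constants r₀, r₁, r₂, r₃ ∈ ℝ such that for all (θ₁, θ₂) in that set: ∂e/∂θ₁(θ₁, θ₂, u) = 1 and ∂e/∂θ₂(θ₁, θ₂, u) = r₀ + r₁ · e(θ₁, θ₂, u) + r₂ θ₁ + r₃ θ₂. Then r₁ + r₂ = 0. -/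
/-- Internal consistency of the log-linear demand specification (Proposition 2):
if on a nonempty open set `∂e/∂θ₁ = 1` and
`∂e/∂θ₂ = r₀ + r₁ e + r₂ θ₁ + r₃ θ₂` for a twice continuously differentiable
expenditure function `e`, then `r₁ + r₂ = 0`. -/
theorem stmt_9 (e : ℝ → ℝ → ℝ → ℝ) (u : ℝ)
    (s : Set (ℝ × ℝ)) (hs : IsOpen s) (hne : s.Nonempty)
    (he : ContDiffOn ℝ 2 (fun p : ℝ × ℝ => e p.1 p.2 u) s)
    (r₀ r₁ r₂ r₃ : ℝ)
    (h1 : ∀ p ∈ s, HasDerivAt (fun θ₁ => e θ₁ p.2 u) 1 p.1)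
    (h2 : ∀ p ∈ s, HasDerivAt (fun θ₂ => e p.1 θ₂ u)
      (r₀ + r₁ * e p.1 p.2 u + r₂ * p.1 + r₃ * p.2) p.2) :
    r₁ + r₂ = 0 := by
  obtain ⟨⟨a, t⟩, hp₀⟩ := hne
  obtain ⟨ε, hε, hball⟩ := Metric.isOpen_iff.mp hs (a, t) hp₀
  obtain ⟨b, hb⟩ : ∃ b, b = a + ε / 2 := ⟨_, rfl⟩
  have hba : b - a = ε / 2 := by rw [hb]; ring
  -- membership of points near p₀
  have hmem : ∀ x ∈ Set.Icc a b, ∀ θ₂ : ℝ, |θ₂ - t| < ε / 2 → (x, θ₂) ∈ s := by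
    intro x hx θ₂ hθ₂
    apply hball
    rw [Metric.mem_ball, Prod.dist_eq]
    have h1' : dist x a < ε := by
      rw [Real.dist_eq, abs_lt]
      constructor <;> nlinarith [hx.1, hx.2]
    have h2' : dist θ₂ t < ε := by
      rw [Real.dist_eq]; calc |θ₂ - t| < ε / 2 := hθ₂
        _ < ε := by linarith
    exact max_lt h1' h2'
  -- constancy in the first argument: e b θ₂ u - b = e a θ₂ u - a
  have hconst : ∀ θ₂ : ℝ, |θ₂ - t| < ε / 2 →
      e b θ₂ u - b = e a θ₂ u - a := by
    intro θ₂ hθ₂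
    have key := constant_of_has_deriv_right_zero (f := fun x => e x θ₂ u - x)
      (a := a) (b := b)
      (fun x hx => (((h1 (x, θ₂) (hmem x hx θ₂ hθ₂)).sub
        (hasDerivAt_id x)).continuousAt).continuousWithinAt)
      (fun x hx => by
        have := ((h1 (x, θ₂) (hmem x ⟨hx.1, le_of_lt hx.2⟩ θ₂ hθ₂)).sub
          (hasDerivAt_id x))
        simpa [Pi.sub_def] using this.hasDerivWithinAt)
    have := key b (Set.right_mem_Icc.mpr (by linarith))
    simpa using this
  have hat : |t - t| < ε / 2 := by simpa using (by linarith : (0:ℝ) < ε / 2)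
  have hmema : (a, t) ∈ s := hmem a (Set.left_mem_Icc.mpr (by linarith)) t hat
  have hmemb : (b, t) ∈ s := hmem b (Set.right_mem_Icc.mpr (by linarith)) t hat
  have hda := h2 (a, t) hmema
  have hdb := h2 (b, t) hmemb
  -- the two functions of θ₂ differ by a constant near t
  have heq : (fun θ₂ => e b θ₂ u) =ᶠ[nhds t] (fun θ₂ => e a θ₂ u + (b - a)) := by
    filter_upwards [Metric.ball_mem_nhds t (by linarith : (0:ℝ) < ε / 2)] with θ₂ hθ₂
    have := hconst θ₂ (by simpa [Real.dist_eq] using hθ₂)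
    linarith
  have hdb' : HasDerivAt (fun θ₂ => e b θ₂ u)
      (r₀ + r₁ * e a t u + r₂ * a + r₃ * t) t := by
    have : HasDerivAt (fun θ₂ => e a θ₂ u + (b - a))
        (r₀ + r₁ * e a t u + r₂ * a + r₃ * t) t := by
      simpa using hda.add_const (b - a)
    exact this.congr_of_eventuallyEq heq
  have huniq : r₀ + r₁ * e b t u + r₂ * b + r₃ * t
      = r₀ + r₁ * e a t u + r₂ * a + r₃ * t := hdb.unique hdb'
  have hebt : e b t u = e a t u + (b - a) := by
    have := hconst t hat; linarith
  have : (r₁ + r₂) * (ε / 2) = 0 := by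
    rw [hebt] at huniq
    rw [← hba]
    linear_combination huniq
  have hε2 : (ε / 2 : ℝ) ≠ 0 := by positivity
  exact (mul_eq_zero.mp this).resolve_right hε2
end

section
/- (Closed-form compensating variation and path independence for the log specification.) Let r₀, r₁, r₃ ∈ ℝ with r₁ ≠ 0, and fix y ∈ ℝ. Let θ₁, θ₂ : [0,1] → ℝ be differentiable with θ₁(0) = a₁, θ₂(0) = a₂, θ₁(1) = b₁, θ₂(1) = b₂. Suppose C : [0,1] → ℝ is differentiable, C(0) = 0, and for all t ∈ [0,1]: C′(t) = θ₁′(t) + θ₂′(t) · ( r₀ + r₁ (y + C(t)) − r₁ θ₁(t) + r₃ θ₂(t) ). Then C(1) = e^{r₁ (b₂ − a₂)} · ( r₀/r₁ + y + a₂ r₃/r₁ + r₃/r₁² − a₁ ) + b₁ − r₀/r₁ − y − r₃ b₂/r₁ − r₃/r₁². In particular C(1) depends only on the endpoint values (a₁, a₂) and (b₁, b₂), not on the path (θ₁(t), θ₂(t)). -/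
/-- Closed-form compensating variation and path independence for the
log specification (Proposition 3): if `C` solves the ODE
`C′(t) = θ₁′(t) + θ₂′(t)(r₀ + r₁(y + C(t)) − r₁θ₁(t) + r₃θ₂(t))` with `C(0)=0`
along any differentiable path with `θ(0) = (a₁,a₂)`, `θ(1) = (b₁,b₂)`, then
`C(1)` is given by the stated closed form depending only on the endpoints. -/
theorem stmt_11 (r₀ r₁ r₃ y a₁ a₂ b₁ b₂ : ℝ) (hr₁ : r₁ ≠ 0)
    (θ₁ θ₂ θ₁' θ₂' : ℝ → ℝ)
    (hθ₁ : ∀ t ∈ Set.Icc (0 : ℝ) 1, HasDerivAt θ₁ (θ₁' t) t)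
    (hθ₂ : ∀ t ∈ Set.Icc (0 : ℝ) 1, HasDerivAt θ₂ (θ₂' t) t)
    (h0a : θ₁ 0 = a₁) (h0b : θ₂ 0 = a₂) (h1a : θ₁ 1 = b₁) (h1b : θ₂ 1 = b₂)
    (C : ℝ → ℝ) (hC0 : C 0 = 0)
    (hC : ∀ t ∈ Set.Icc (0 : ℝ) 1,
      HasDerivAt C
        (θ₁' t + θ₂' t * (r₀ + r₁ * (y + C t) - r₁ * θ₁ t + r₃ * θ₂ t)) t) :
    C 1 = Real.exp (r₁ * (b₂ - a₂))
        * (r₀ / r₁ + y + a₂ * r₃ / r₁ + r₃ / r₁ ^ 2 - a₁)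
      + b₁ - r₀ / r₁ - y - r₃ * b₂ / r₁ - r₃ / r₁ ^ 2 := by
  set F : ℝ → ℝ := fun t =>
    Real.exp (-(r₁ * θ₂ t)) *
      (r₀ / r₁ + y + C t - θ₁ t + r₃ * θ₂ t / r₁ + r₃ / r₁ ^ 2) with hF
  have key : ∀ t ∈ Set.Icc (0 : ℝ) 1, HasDerivAt F 0 t := by
    intro t ht
    have h1 := hθ₁ t ht
    have h2 := hθ₂ t ht
    have h3 := hC t ht
    have he : HasDerivAt (fun s => Real.exp (-(r₁ * θ₂ s)))
        (Real.exp (-(r₁ * θ₂ t)) * (-(r₁ * θ₂' t))) t :=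
      ((h2.const_mul r₁).neg).exp
    have hg : HasDerivAt
        (fun s => r₀ / r₁ + y + C s - θ₁ s + r₃ * θ₂ s / r₁ + r₃ / r₁ ^ 2)
        ((θ₁' t + θ₂' t * (r₀ + r₁ * (y + C t) - r₁ * θ₁ t + r₃ * θ₂ t))
          - θ₁' t + r₃ * θ₂' t / r₁) t := by
      have := ((((h3.const_add (r₀ / r₁ + y)).sub h1).add
        ((h2.const_mul r₃).div_const r₁)).add_const (r₃ / r₁ ^ 2))
      exact this
    have hmul := he.mul hg
    refine hmul.congr_deriv ?_
    field_simp
    ring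
  have hconst := constant_of_has_deriv_right_zero
    (f := F) (a := (0:ℝ)) (b := 1)
    (fun t ht => ((key t ht).continuousAt).continuousWithinAt)
    (fun t ht => ((key t (Set.mem_Icc_of_Ico ht)).hasDerivWithinAt))
  have heq : F 1 = F 0 := hconst 1 (by norm_num)
  simp only [hF, h1a, h1b, h0a, h0b, hC0] at heq
  have hE : Real.exp (r₁ * (b₂ - a₂)) * Real.exp (-(r₁ * b₂))
      = Real.exp (-(r₁ * a₂)) := by
    rw [← Real.exp_add]; ring_nf
  have hne : Real.exp (-(r₁ * b₂)) ≠ 0 := Real.exp_ne_zero _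
  have : Real.exp (-(r₁ * b₂)) *
      (r₀ / r₁ + y + C 1 - b₁ + r₃ * b₂ / r₁ + r₃ / r₁ ^ 2)
      = Real.exp (-(r₁ * b₂)) *
      (Real.exp (r₁ * (b₂ - a₂)) *
        (r₀ / r₁ + y + 0 - a₁ + r₃ * a₂ / r₁ + r₃ / r₁ ^ 2)) := by
    rw [heq, ← hE]; ring
  have hcancel := mul_left_cancel₀ hne this
  linear_combination hcancel
end
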